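/- For a balanced word v = a_1⋯a_m, in the q-shuffle algebra one has (q·x⋆(vy) - q^{-1}·(vy)⋆x)/(q-q^{-1}) = q^{-1} ∑_{i=0}^m a_1⋯a_i x a_{i+1}⋯a_m y · [2 + 2ā_1 + 2ā_2 + ⋯ + 2ā_i]_q. -/

import Mathlib

open scoped Classical

inductive Letter | x | y
deriving DecidableEq

instance : Fintype Letter :=
  ⟨⟨[Letter.x, Letter.y], by simp⟩, fun a => by cases a <;> simp⟩

/-- x ↦ 1, y ↦ -1 -/
def bar : Letter → ℤ
  | .x => 1
  | .y => -1

/-- σ swaps the letters x and y. -/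
def sigma : Letter → Letter
  | .x => .y
  | .y => .x

/-- the pairing ⟨u,v⟩ : 2 if u = v, -2 otherwise. -/
def pair : Letter → Letter → ℤ := fun u v => if u = v then 2 else -2

noncomputable section

/-- The free associative algebra on the two letters x, y (with its word basis). -/
abbrev V (F : Type*) [Field F] := MonoidAlgebra F (FreeMonoid Letter)

variable {F : Type*} [Field F]

/-- the basis word of V corresponding to a list of letters -/
def wd (w : List Letter) : V F := MonoidAlgebra.single (FreeMonoid.ofList w) 1

/-- the q-shuffle product of two words, by the left recursion -/
def shuffleWord (q : F) : List Letter → List Letter → V F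
  | [], v => wd v
  | u1 :: ut, [] => wd (u1 :: ut)
  | u1 :: ut, v1 :: vt =>
      wd [u1] * shuffleWord q ut (v1 :: vt)
      + q ^ (((u1 :: ut).map (fun a => pair a v1)).sum) •
          (wd [v1] * shuffleWord q (u1 :: ut) vt)
termination_by u v => u.length + v.length

/-- the q-shuffle product on V, extended bilinearly -/
def shuffle (q : F) (a b : V F) : V F :=
  a.coeff.sum fun u cu => b.coeff.sum fun v cv =>
    (cu * cv) • shuffleWord q (FreeMonoid.toList u) (FreeMonoid.toList v)

/-- the quantum integer [m]_q -/
def qint (q : F) (m : ℤ) : F := (q ^ m - q ^ (-m)) / (q - q⁻¹)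

/-- the quantum factorial [m]_q! -/
def qfac (q : F) (m : ℤ) : F := ∏ j ∈ Finset.range m.toNat, qint q ((j : ℤ) + 1)

/-- e_i = ā_1 + ⋯ + ā_i, the i-th elevation of the word w -/
def esum (w : List Letter) (i : ℕ) : ℤ := ((w.take i).map bar).sum

/-- A word is Catalan when all partial sums of bar are nonnegative and the total is zero. -/
def IsCatalan (w : List Letter) : Prop :=
  (∀ i, i ≤ w.length → 0 ≤ esum w i) ∧ esum w w.length = 0

/-- the coefficient C(w) = ∏_{i=0}^{2n} [1 + e_i]_q -/
def Ccoef (q : F) (w : List Letter) : F :=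
  ∏ i ∈ Finset.range (w.length + 1), qint q (1 + esum w i)

/-- the n-th Catalan element C_n = ∑_{w ∈ Cat_n} C(w) w  -/
def catalanElt (q : F) (n : ℕ) : V F :=
  ∑ f : Fin (2 * n) → Letter,
    if IsCatalan (List.ofFn f) then Ccoef q (List.ofFn f) • wd (List.ofFn f) else 0

/-- the antiautomorphism ζ : reverse the word and swap x,y, extended linearly -/
def zeta (a : V F) : V F :=
  a.coeff.sum fun w c =>
    MonoidAlgebra.single (FreeMonoid.ofList (((FreeMonoid.toList w).map sigma).reverse)) c

/-- The profile of a word: delete from the elevation sequence every interior e_i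
    such that e_{i+1}-e_i and e_i-e_{i-1} have the same sign. -/
def profile (w : List Letter) : List ℤ :=
  (List.range (w.length + 1)).filterMap fun i =>
    if i = 0 ∨ i = w.length then some (esum w i)
    else if 0 < (esum w (i + 1) - esum w i) * (esum w i - esum w (i - 1)) then none
    else some (esum w i)

/-- The list (ℓ_0, h_1, ℓ_1, h_2, …, h_r, ℓ_r). -/
def P (r : ℕ) (ℓ h : ℕ → ℤ) : List ℤ :=
  List.ofFn fun i : Fin (2 * r + 1) =>
    if i.val % 2 = 0 then ℓ (i.val / 2) else h ((i.val + 1) / 2)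

/-- the word x^{h_1} y^{h_1-ℓ_1} x^{h_2-ℓ_1} y^{h_2-ℓ_2} ⋯ x^{h_r-ℓ_{r-1}} y^{h_r} -/
def explicitWord (r : ℕ) (ℓ h : ℕ → ℤ) : List Letter :=
  (List.range r).flatMap fun i =>
    List.replicate (h (i + 1) - ℓ i).toNat Letter.x ++
      List.replicate (h (i + 1) - ℓ (i + 1)).toNat Letter.y

/-- C(ℓ_0,h_1,…,h_r,ℓ_r), the ratio of q-factorials attached to a profile. -/
def Cprof (q : F) (r : ℕ) (ℓ h : ℕ → ℤ) : F :=
  (∏ i ∈ Finset.Icc 1 r, qfac q (h i) * qfac q (h i + 1)) /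
    (∏ i ∈ Finset.range (r + 1), qfac q (ℓ i) * qfac q (ℓ i + 1))

end


section myaux
variable {F : Type*} [Field F]

lemma wd_cons (a : Letter) (l : List Letter) : (wd [a] : V F) * wd l = wd (a :: l) := by
  simp only [wd, MonoidAlgebra.single_mul_single, one_mul]
  rfl

lemma shuffle_wd (q : F) (u w : List Letter) :
    shuffle q (wd u) (wd w) = shuffleWord q u w := by
  simp [shuffle, wd, MonoidAlgebra.coeff_single, Finsupp.sum_single_index]

lemma esum_zero' (w : List Letter) : esum w 0 = 0 := by simp [esum]

lemma esum_cons (a : Letter) (w : List Letter) (i : ℕ) :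
    esum (a :: w) (i + 1) = bar a + esum w i := by simp [esum]

lemma pair_x (a : Letter) : pair a Letter.x = 2 * bar a := by cases a <;> decide

lemma pair_x' (a : Letter) : pair Letter.x a = 2 * bar a := by cases a <;> decide

lemma shuffleWord_x_left (q : F) (hq0 : q ≠ 0) (w : List Letter) :
    shuffleWord q [Letter.x] w
      = ∑ i ∈ Finset.range (w.length + 1),
          (q ^ (2 * esum w i)) • (wd (w.take i ++ Letter.x :: w.drop i) : V F) := by
  induction w with
  | nil => simp [shuffleWord, esum, wd]
  | cons v1 vt ih =>
      rw [shuffleWord]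
      rw [show shuffleWord q [] (v1 :: vt) = wd (v1 :: vt) from by rw [shuffleWord]]
      rw [ih, Finset.mul_sum, Finset.smul_sum]
      simp only [List.length_cons]
      rw [Finset.sum_range_succ' _ (vt.length + 1), add_comm]
      congr 1
      · apply Finset.sum_congr rfl
        intro i _
        rw [mul_smul_comm, smul_smul, wd_cons, esum_cons]
        congr 1
        simp only [List.map_cons, List.map_nil, List.sum_cons, List.sum_nil, add_zero, pair_x']
        rw [← zpow_add₀ hq0]
        ring_nf
      · rw [esum_zero', wd_cons]
        simp

lemma shuffleWord_x_right (q : F) (hq0 : q ≠ 0) (w : List Letter) :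
    shuffleWord q w [Letter.x]
      = ∑ i ∈ Finset.range (w.length + 1),
          (q ^ (2 * (esum w w.length - esum w i)))
            • (wd (w.take i ++ Letter.x :: w.drop i) : V F) := by
  induction w with
  | nil => simp [shuffleWord, esum, wd]
  | cons u1 ut ih =>
      rw [shuffleWord]
      rw [show shuffleWord q (u1 :: ut) [] = wd (u1 :: ut) from by rw [shuffleWord]]
      rw [ih, Finset.mul_sum]
      simp only [List.length_cons]
      rw [Finset.sum_range_succ' _ (ut.length + 1)]
      congr 1
      · apply Finset.sum_congr rfl
        intro i _
        rw [mul_smul_comm, wd_cons]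
        congr 2
        rw [esum_cons, esum_cons]
        ring
      · simp only [List.take_zero, List.drop_zero, List.nil_append]
        rw [wd_cons, esum_zero', sub_zero]
        congr 2
        have hmap : ∀ l : List Letter,
            ((l.map fun a => pair a Letter.x).sum) = 2 * esum l l.length := by
          intro l
          induction l with
          | nil => simp [esum]
          | cons b t iht =>
              rw [List.map_cons, List.sum_cons, iht, pair_x, List.length_cons, esum_cons]
              ring
        rw [hmap]
        simp

lemma esum_append_le (v l : List Letter) (i : ℕ) (h : i ≤ v.length) :
    esum (v ++ l) i = esum v i := by
  simp [esum, List.take_append_of_le_length h]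

lemma key_scalar (q : F) (hq0 : q ≠ 0) (e : ℤ) :
    (q - q⁻¹)⁻¹ * (q * q ^ (2 * e) - q⁻¹ * q ^ (2 * (-1 - e))) = q⁻¹ * qint q (2 + 2 * e) := by
  have e1 : q * q ^ (2 * e) = q ^ ((2 + 2 * e) - 1) := by
    rw [show (2 + 2 * e) - 1 = 1 + 2 * e by ring, zpow_add₀ hq0, zpow_one]
  have e2 : q⁻¹ * q ^ (2 * (-1 - e)) = q ^ (-(2 + 2 * e) - 1) := by
    rw [show -(2 + 2 * e) - 1 = (-1) + 2 * (-1 - e) by ring, zpow_add₀ hq0, zpow_neg_one]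
  have e3 : q ^ ((2 + 2 * e) - 1) = q⁻¹ * q ^ (2 + 2 * e) := by
    rw [show (2 + 2 * e) - 1 = (-1) + (2 + 2 * e) by ring, zpow_add₀ hq0, zpow_neg_one]
  have e4 : q ^ (-(2 + 2 * e) - 1) = q⁻¹ * q ^ (-(2 + 2 * e)) := by
    rw [show -(2 + 2 * e) - 1 = (-1) + (-(2 + 2 * e)) by ring, zpow_add₀ hq0, zpow_neg_one]
  rw [e1, e2, e3, e4, qint, div_eq_mul_inv]
  ring

end myaux

theorem stmt10 {F : Type*} [Field F] (q : F) (hq0 : q ≠ 0)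
    (hq : ∀ k : ℕ, 0 < k → q ^ k ≠ 1) (v : List Letter) (hv : esum v v.length = 0) :
    (q - q⁻¹)⁻¹ • (q • shuffle q (wd [Letter.x]) (wd (v ++ [Letter.y]))
        - q⁻¹ • shuffle q (wd (v ++ [Letter.y])) (wd [Letter.x]))
      = q⁻¹ • ∑ i ∈ Finset.range (v.length + 1),
          qint q (2 + 2 * esum v i) •
            (wd (v.take i ++ Letter.x :: (v.drop i ++ [Letter.y])) : V F) := by
  have hw : (v ++ [Letter.y]).length = v.length + 1 := by simp
  have hlast : esum (v ++ [Letter.y]) (v.length + 1) = -1 := by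
    have ht : (v ++ [Letter.y]).take (v.length + 1) = v ++ [Letter.y] :=
      List.take_of_length_le (by simp)
    have hsum : (List.map bar v).sum = 0 := by simpa [esum] using hv
    simp [esum, ht, bar, hsum]
  rw [shuffle_wd, shuffle_wd, shuffleWord_x_left q hq0, shuffleWord_x_right q hq0, hw]
  rw [Finset.smul_sum, Finset.smul_sum, ← Finset.sum_sub_distrib, Finset.smul_sum,
    Finset.smul_sum, Finset.sum_range_succ]
  have hz : (q - q⁻¹)⁻¹ •
      (q • (q ^ (2 * esum (v ++ [Letter.y]) (v.length + 1)))
          • (wd ((v ++ [Letter.y]).take (v.length + 1) ++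
              Letter.x :: (v ++ [Letter.y]).drop (v.length + 1)) : V F)
        - q⁻¹ • (q ^ (2 * (esum (v ++ [Letter.y]) (v.length + 1)
              - esum (v ++ [Letter.y]) (v.length + 1))))
          • wd ((v ++ [Letter.y]).take (v.length + 1) ++
              Letter.x :: (v ++ [Letter.y]).drop (v.length + 1))) = 0 := by
    rw [hlast, smul_smul, smul_smul, ← sub_smul, smul_smul]
    have : q * q ^ (2 * (-1 : ℤ)) - q⁻¹ * q ^ (2 * ((-1 : ℤ) - (-1))) = 0 := by
      rw [show (2 * (-1 : ℤ)) = (-1) + (-1) by ring, zpow_add₀ hq0, zpow_neg_one]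
      field_simp
      simp
    rw [this, mul_zero, zero_smul]
  rw [hz, add_zero]
  apply Finset.sum_congr rfl
  intro i hi
  have hi' : i ≤ v.length := Nat.lt_succ_iff.mp (Finset.mem_range.mp hi)
  have hword : (v ++ [Letter.y]).take i ++ Letter.x :: (v ++ [Letter.y]).drop i
      = v.take i ++ Letter.x :: (v.drop i ++ [Letter.y]) := by
    rw [List.take_append_of_le_length hi', List.drop_append_of_le_length hi']
  have he : esum (v ++ [Letter.y]) i = esum v i := esum_append_le v _ i hi'
  rw [hword, he, hlast, smul_smul, smul_smul, ← sub_smul, smul_smul, smul_smul]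
  congr 1
  rw [show ((-1 : ℤ) - esum v i) = (-1 - esum v i) by ring]
  exact key_scalar q hq0 (esum v i)
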